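/- Let y ∈ ℝ² and let (B_i)_{i∈ℕ} be a sequence of open discs B_i = B(x_i, r_i) in ℝ² such that y ∉ cl(B_i) for every i and the sum over i of r_i/‖y−x_i‖ is finite. Then the set of directions {u ∈ S¹ : the ray {y + tu : t > 0} intersects B_i for infinitely many i} has zero one-dimensional Hausdorff measure H¹ in S¹. -/

import Mathlib

open Metric MeasureTheory Set

noncomputable section

/-- The Euclidean plane. -/
abbrev E2 := EuclideanSpace ℝ (Fin 2)

namespace Stmt11Aux

open Real Filter

def circ (θ : ℝ) : E2 := (WithLp.equiv 2 (Fin 2 → ℝ)).symm ![Real.cos θ, Real.sin θ]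

lemma norm_circ_sub (a b : ℝ) : ‖circ a - circ b‖ = 2 * |Real.sin ((a - b) / 2)| := by
  have hsq : Real.sin ((a - b) / 2) ^ 2 = 1 / 2 - Real.cos (a - b) / 2 := by
    have := Real.sin_sq_eq_half_sub ((a - b) / 2)
    rw [show 2 * ((a - b) / 2) = a - b by ring] at this
    linarith
  have h1 := Real.sin_sq_add_cos_sq a
  have h2 := Real.sin_sq_add_cos_sq b
  have hc : Real.cos (a - b) = Real.cos a * Real.cos b + Real.sin a * Real.sin b :=
    Real.cos_sub a b
  rw [EuclideanSpace.norm_eq]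
  have hval : ∑ i : Fin 2, ‖(circ a - circ b) i‖ ^ 2 = (2 * |Real.sin ((a - b) / 2)|) ^ 2 := by
    have : ∀ i : Fin 2, (circ a - circ b) i
        = (![Real.cos a, Real.sin a] i) - (![Real.cos b, Real.sin b] i) := fun i => rfl
    simp only [this, Fin.sum_univ_two, Real.norm_eq_abs, sq_abs]
    simp only [Matrix.cons_val_zero, Matrix.cons_val_one, Matrix.head_cons]
    have := sq_abs (Real.sin ((a - b) / 2))
    nlinarith [hsq, h1, h2, hc]
  rw [hval, Real.sqrt_sq (by positivity)]

lemma lipschitz_circ : LipschitzWith 1 circ := by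
  apply LipschitzWith.of_dist_le_mul
  intro a b
  rw [dist_eq_norm, norm_circ_sub, Real.dist_eq, NNReal.coe_one, one_mul]
  have h := Real.abs_sin_le_abs (x := (a - b) / 2)
  have h2 : |(a - b) / 2| = |a - b| / 2 := by rw [abs_div]; norm_num
  linarith [h2 ▸ h]

lemma exists_circ {u : E2} (hu : ‖u‖ = 1) : ∃ θ, circ θ = u := by
  have hsum : u 0 ^ 2 + u 1 ^ 2 = 1 := by
    have h1 : Real.sqrt (∑ i : Fin 2, ‖u i‖ ^ 2) = 1 := by
      rw [← EuclideanSpace.norm_eq]; exact hu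
    have h2 : ∑ i : Fin 2, ‖u i‖ ^ 2 = 1 := by
      nlinarith [Real.sq_sqrt (by positivity : (0:ℝ) ≤ ∑ i : Fin 2, ‖u i‖ ^ 2), h1]
    simpa [Fin.sum_univ_two, Real.norm_eq_abs, sq_abs] using h2
  have ha1 : -1 ≤ u 0 := by nlinarith [sq_nonneg (u 1)]
  have ha2 : u 0 ≤ 1 := by nlinarith [sq_nonneg (u 1)]
  have hcos : Real.cos (Real.arccos (u 0)) = u 0 := Real.cos_arccos ha1 ha2
  have hsin : Real.sin (Real.arccos (u 0)) = Real.sqrt (1 - u 0 ^ 2) := Real.sin_arccos (u 0)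
  have habs : Real.sqrt (1 - u 0 ^ 2) = |u 1| := by
    rw [show 1 - u 0 ^ 2 = u 1 ^ 2 by linarith, Real.sqrt_sq_eq_abs]
  rcases le_or_gt 0 (u 1) with hb | hb
  · refine ⟨Real.arccos (u 0), ?_⟩
    ext i
    fin_cases i
    · simpa [circ] using hcos
    · simp only [circ]
      show Real.sin (Real.arccos (u 0)) = u 1
      rw [hsin, habs, abs_of_nonneg hb]
  · refine ⟨-Real.arccos (u 0), ?_⟩
    ext i
    fin_cases i
    · simpa [circ] using hcos
    · simp only [circ]
      show Real.sin (-Real.arccos (u 0)) = u 1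
      rw [Real.sin_neg, hsin, habs, abs_of_neg hb, neg_neg]

lemma circ_sub_int_mul (θ : ℝ) (n : ℤ) : circ (θ - n * (2 * Real.pi)) = circ θ := by
  ext i
  fin_cases i
  · show Real.cos (θ - n * (2 * Real.pi)) = Real.cos θ
    exact Real.cos_sub_int_mul_two_pi θ n
  · show Real.sin (θ - n * (2 * Real.pi)) = Real.sin θ
    exact Real.sin_sub_int_mul_two_pi θ n

lemma key {y xi : E2} {ri : ℝ} (hri : 0 < ri) (hd : ri < ‖y - xi‖) {u : E2} (hu : ‖u‖ = 1)
    {t : ℝ} (ht : 0 < t) (hmem : y + t • u ∈ Metric.ball xi ri) :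
    ‖u - ‖y - xi‖⁻¹ • (xi - y)‖ < Real.sqrt 2 * (ri / ‖y - xi‖) := by
  set w : E2 := xi - y with hw
  set d : ℝ := ‖y - xi‖ with hdd
  have hdpos : 0 < d := lt_trans hri hd
  have hwnorm : ‖w‖ = d := by rw [hw, hdd, norm_sub_rev]
  have hball : ‖t • u - w‖ < ri := by
    have h1 : y + t • u - xi = t • u - w := by rw [hw]; abel
    have := mem_ball_iff_norm.mp hmem
    rwa [h1] at this
  have hsq : ‖t • u - w‖ ^ 2 = t ^ 2 - 2 * (t * inner ℝ u w) + d ^ 2 := by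
    rw [norm_sub_sq_real, real_inner_smul_left, norm_smul, hwnorm, hu,
      Real.norm_eq_abs, abs_of_pos ht]
    ring
  have hlt : t ^ 2 - 2 * (t * inner ℝ u w) + d ^ 2 < ri ^ 2 := by
    rw [← hsq]
    exact pow_lt_pow_left₀ hball (norm_nonneg _) (by norm_num)
  set q : ℝ := Real.sqrt (d ^ 2 - ri ^ 2) with hqdef
  have hq0 : 0 ≤ q := Real.sqrt_nonneg _
  have hq2 : q ^ 2 = d ^ 2 - ri ^ 2 := Real.sq_sqrt (by nlinarith)
  have hqd : q ≤ d := by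
    rw [hqdef]
    calc Real.sqrt (d ^ 2 - ri ^ 2) ≤ Real.sqrt (d ^ 2) := Real.sqrt_le_sqrt (by nlinarith)
    _ = d := Real.sqrt_sq hdpos.le
  have hinner : q < (inner ℝ u w : ℝ) := by nlinarith [sq_nonneg (t - q)]
  have hvnorm : ‖(d⁻¹ : ℝ) • w‖ = 1 := by
    rw [norm_smul, hwnorm, Real.norm_eq_abs, abs_of_pos (inv_pos.mpr hdpos),
      inv_mul_cancel₀ hdpos.ne']
  have hexp : ‖u - (d⁻¹ : ℝ) • w‖ ^ 2 = 2 - 2 * (d⁻¹ * inner ℝ u w) := by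
    rw [norm_sub_sq_real, real_inner_smul_right, hvnorm, hu]
    ring
  have hrhs : 0 ≤ Real.sqrt 2 * (ri / d) := by positivity
  refine lt_of_pow_lt_pow_left₀ 2 hrhs ?_
  have hr2 : (Real.sqrt 2 * (ri / d)) ^ 2 = 2 * ri ^ 2 / d ^ 2 := by
    rw [mul_pow, Real.sq_sqrt (by norm_num : (0:ℝ) ≤ 2)]
    field_simp
  rw [hexp, hr2, lt_div_iff₀ (by positivity : (0:ℝ) < d ^ 2)]
  have h1 : (2 - 2 * (d⁻¹ * inner ℝ u w)) * d ^ 2 = 2 * d ^ 2 - 2 * ((inner ℝ u w : ℝ) * d) := by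
    field_simp
  rw [h1]
  nlinarith [mul_lt_mul_of_pos_right hinner hdpos, hq2, hqd, hq0]

lemma cover {v : E2} (θ0 : ℝ) (hθ0 : circ θ0 = v) {ρ : ℝ} :
    {u : E2 | ‖u‖ = 1 ∧ ‖u - v‖ < ρ}
      ⊆ circ '' Set.Icc (θ0 - π / 2 * ρ) (θ0 + π / 2 * ρ) := by
  rintro u ⟨hu, hρ⟩
  obtain ⟨θ, hθ⟩ := exists_circ hu
  have h2π : (0:ℝ) < 2 * π := Real.two_pi_pos
  set θ' := toIocMod h2π (θ0 - π) θ with hθ'def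
  have hmem := toIocMod_mem_Ioc h2π (θ0 - π) θ
  obtain ⟨hmem1, hmem2⟩ := hmem
  have hcirc : circ θ' = u := by
    have h := self_sub_toIocMod h2π (θ0 - π) θ
    have hθ'eq : θ' = θ - (toIocDiv h2π (θ0 - π) θ : ℝ) * (2 * π) := by
      rw [zsmul_eq_mul] at h; linarith
    rw [hθ'eq, circ_sub_int_mul, hθ]
  have habs : |θ' - θ0| ≤ π := abs_le.mpr ⟨by linarith, by linarith⟩
  have hnormval : ‖u - v‖ = 2 * |Real.sin ((θ' - θ0) / 2)| := by
    rw [← hcirc, ← hθ0, norm_circ_sub]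
  set m : ℝ := |θ' - θ0| / 2 with hm
  have hm0 : 0 ≤ m := by positivity
  have hmπ : m ≤ π / 2 := by rw [hm]; linarith
  have habs2 : |(θ' - θ0) / 2| = m := by rw [hm, abs_div]; norm_num
  have hsinabs : |Real.sin ((θ' - θ0) / 2)| = Real.sin m := by
    rcases le_or_gt 0 (θ' - θ0) with h | h
    · have hz : (θ' - θ0) / 2 = m := by rw [hm, abs_of_nonneg h]
      rw [hz, abs_of_nonneg (Real.sin_nonneg_of_nonneg_of_le_pi hm0
        (by linarith [Real.pi_pos]))]
    · have hz : (θ' - θ0) / 2 = -m := by rw [hm, abs_of_neg h]; ring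
      rw [hz, Real.sin_neg, abs_neg, abs_of_nonneg (Real.sin_nonneg_of_nonneg_of_le_pi hm0
        (by linarith [Real.pi_pos]))]
  have hjordan := Real.mul_le_sin hm0 hmπ
  have hπpos := Real.pi_pos
  have hj2 : 2 * m ≤ π * Real.sin m := by
    have := mul_le_mul_of_nonneg_left hjordan hπpos.le
    rw [show π * (2 / π * m) = 2 * m by field_simp] at this
    linarith
  have hfin : |θ' - θ0| ≤ π / 2 * ‖u - v‖ := by
    rw [hnormval, hsinabs]
    rw [hm] at hj2
    linarith
  have hlt : |θ' - θ0| < π / 2 * ρ := by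
    calc |θ' - θ0| ≤ π / 2 * ‖u - v‖ := hfin
      _ < π / 2 * ρ := by
          apply mul_lt_mul_of_pos_left hρ
          positivity
  obtain ⟨hl, hr⟩ := abs_lt.mp hlt
  exact ⟨θ', ⟨by linarith, by linarith⟩, hcirc⟩

end Stmt11Aux

open Stmt11Aux Filter Real

/-- If `y` lies outside the closure of each disc `B_i = B(x_i, r_i)` and `∑ r_i/‖y−x_i‖ < ∞`,
then the set of unit directions whose ray from `y` meets infinitely many of the discs has zero
one-dimensional Hausdorff measure. -/
theorem stmt11 (y : E2) (x : ℕ → E2) (r : ℕ → ℝ)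
    (hcl : ∀ i, y ∉ closure (Metric.ball (x i) (r i)))
    (hsum : Summable fun i => r i / ‖y - x i‖) :
    MeasureTheory.Measure.hausdorffMeasure 1
      {u : E2 | u ∈ Metric.sphere (0 : E2) 1 ∧
        Set.Infinite {i : ℕ | ∃ t > (0 : ℝ), y + t • u ∈ Metric.ball (x i) (r i)}} = 0 := by
  classical
  set D : ℕ → Set E2 :=
    fun i => {u : E2 | ‖u‖ = 1 ∧ ∃ t > (0:ℝ), y + t • u ∈ Metric.ball (x i) (r i)} with hD
  have hT : {u : E2 | u ∈ Metric.sphere (0 : E2) 1 ∧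
        Set.Infinite {i : ℕ | ∃ t > (0 : ℝ), y + t • u ∈ Metric.ball (x i) (r i)}}
      ⊆ limsup D atTop := by
    rintro u ⟨hu, hinf⟩
    rw [mem_limsup_iff_frequently_mem, frequently_atTop]
    intro n
    obtain ⟨i, hi, hni⟩ := hinf.exists_gt n
    exact ⟨i, hni.le, mem_sphere_zero_iff_norm.mp hu, hi⟩
  have hmeas : ∀ i, μH[1] (D i) ≤ ENNReal.ofReal (6 * |r i / ‖y - x i‖|) := by
    intro i
    rcases le_or_gt (r i) 0 with hri | hri
    · have hempty : D i = ∅ := by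
        ext u
        simp only [hD, mem_setOf_eq, mem_empty_iff_false, iff_false, not_and]
        rintro - ⟨t, -, hmem⟩
        rw [Metric.ball_eq_empty.mpr hri] at hmem
        exact hmem
      simp [hempty]
    · have hdlt : r i < ‖y - x i‖ := by
        have h1 : y ∉ Metric.closedBall (x i) (r i) := by
          rw [← closure_ball (x i) hri.ne']; exact hcl i
        have h2 : ¬ dist y (x i) ≤ r i := h1
        rw [dist_eq_norm] at h2
        exact not_le.mp h2
      have hdpos : 0 < ‖y - x i‖ := hri.trans hdlt
      set v : E2 := ‖y - x i‖⁻¹ • (x i - y) with hv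
      have hvnorm : ‖v‖ = 1 := by
        rw [hv, norm_smul, Real.norm_eq_abs, abs_of_pos (inv_pos.mpr hdpos),
          norm_sub_rev (x i) y, inv_mul_cancel₀ hdpos.ne']
      obtain ⟨θ0, hθ0⟩ := exists_circ hvnorm
      set ρ : ℝ := Real.sqrt 2 * (r i / ‖y - x i‖) with hρ
      have hsub : D i ⊆ circ '' Set.Icc (θ0 - π / 2 * ρ) (θ0 + π / 2 * ρ) := by
        intro u hu
        obtain ⟨hu1, t, ht, hmem⟩ := hu
        exact cover θ0 hθ0 ⟨hu1, key hri hdlt hu1 ht hmem⟩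
      calc μH[1] (D i) ≤ μH[1] (circ '' Set.Icc (θ0 - π / 2 * ρ) (θ0 + π / 2 * ρ)) :=
            measure_mono hsub
        _ ≤ volume (Set.Icc (θ0 - π / 2 * ρ) (θ0 + π / 2 * ρ)) := by
            have himg := lipschitz_circ.hausdorffMeasure_image_le (d := 1) zero_le_one
              (Set.Icc (θ0 - π / 2 * ρ) (θ0 + π / 2 * ρ))
            simpa [MeasureTheory.hausdorffMeasure_real] using himg
        _ = ENNReal.ofReal (π * ρ) := by
            rw [Real.volume_Icc]
            congr 1
            ring
        _ ≤ ENNReal.ofReal (6 * |r i / ‖y - x i‖|) := by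
            apply ENNReal.ofReal_le_ofReal
            have hs : 0 < r i / ‖y - x i‖ := div_pos hri hdpos
            rw [abs_of_pos hs]
            have hsqrt2 : Real.sqrt 2 ≤ 1.5 := by
              nlinarith [Real.sq_sqrt (by norm_num : (0:ℝ) ≤ 2), Real.sqrt_nonneg 2]
            have hπ : π ≤ 4 := Real.pi_le_four
            rw [hρ]
            have h6 : π * Real.sqrt 2 ≤ 6 := by
              nlinarith [Real.sqrt_nonneg 2, Real.pi_pos]
            calc π * (Real.sqrt 2 * (r i / ‖y - x i‖)) = (π * Real.sqrt 2) * (r i / ‖y - x i‖) := by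
                  ring
              _ ≤ 6 * (r i / ‖y - x i‖) := mul_le_mul_of_nonneg_right h6 hs.le
  have hsum6 : Summable (fun i => 6 * |r i / ‖y - x i‖|) := (hsum.abs).mul_left 6
  have htsum : ∑' i, μH[1] (D i) ≠ ⊤ := by
    apply ne_top_of_le_ne_top _ (ENNReal.tsum_le_tsum hmeas)
    rw [← ENNReal.ofReal_tsum_of_nonneg (fun n => by positivity) hsum6]
    exact ENNReal.ofReal_ne_top
  have h0 : μH[1] (limsup D atTop) = 0 :=
    MeasureTheory.measure_limsup_atTop_eq_zero htsum
  exact measure_mono_null hT h0
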